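/- One has u_0 = w_0 = 0, u_n = w_m = m+n−1, u_j = ⌊jm/n⌋ + j for 1 ≤ j ≤ n−1, and w_j = ⌊jn/m⌋ + j for 1 ≤ j ≤ m−1; both (u_j) and (w_j) are strictly increasing, and moreover u_j + u_{n−j} = m+n−1 for 0 ≤ j ≤ n and w_j + w_{m−j} = m+n−1 for 0 ≤ j ≤ m. -/

import Mathlib

lemma card_mult_aux (d N : ℕ) (hd : 0 < d) (hN : 0 < N) :
    ((Finset.range N).filter (fun x => d ∣ x)).card = (N - 1) / d + 1 := by
  have himg : (Finset.range N).filter (fun x => d ∣ x)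
      = (Finset.range ((N - 1) / d + 1)).image (fun t => d * t) := by
    ext x
    simp only [Finset.mem_filter, Finset.mem_range, Finset.mem_image]
    constructor
    · rintro ⟨hx, t, rfl⟩
      refine ⟨t, ?_, rfl⟩
      rw [Nat.lt_succ_iff, Nat.le_div_iff_mul_le hd, mul_comm]
      omega
    · rintro ⟨t, ht, rfl⟩
      rw [Nat.lt_succ_iff, Nat.le_div_iff_mul_le hd, mul_comm] at ht
      exact ⟨by omega, ⟨t, rfl⟩⟩
  rw [himg, Finset.card_image_of_injective _ (mul_right_injective₀ (by omega)),
    Finset.card_range]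

lemma count_val (m n j : ℕ) (hm : 1 ≤ m) (hcop : Nat.Coprime m n) (hj1 : 1 ≤ j)
    (hjn : j < n) :
    ((Finset.range (j * m)).filter (fun x => m ∣ x ∨ n ∣ x)).card = j * m / n + j := by
  have hn : 0 < n := by omega
  have hN : 0 < j * m := Nat.mul_pos (by omega) hm
  have hndvd : ¬ n ∣ j * m := by
    intro hdvd
    have h1 : n ∣ j := (Nat.Coprime.dvd_of_dvd_mul_right hcop.symm) hdvd
    have := Nat.le_of_dvd (by omega) h1
    omega
  have hcm : ((Finset.range (j * m)).filter (fun x => m ∣ x)).card = j := by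
    rw [card_mult_aux m _ hm hN]
    have h2 : (j - 1) * m = j * m - m := by rw [Nat.sub_mul, one_mul]
    have h3 : m ≤ j * m := Nat.le_mul_of_pos_left m (by omega)
    have h1 : j * m - 1 = (m - 1) + (j - 1) * m := by omega
    rw [h1, Nat.add_mul_div_right _ _ hm, Nat.div_eq_of_lt (by omega)]
    omega
  have hcn : ((Finset.range (j * m)).filter (fun x => n ∣ x)).card = j * m / n + 1 := by
    rw [card_mult_aux n _ hn hN]
    congr 1
    have hmod := Nat.div_add_mod (j * m) n
    have hr1 : 1 ≤ j * m % n := by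
      rcases Nat.eq_zero_or_pos (j * m % n) with h | h
      · exact absurd (Nat.dvd_of_mod_eq_zero h) hndvd
      · omega
    have hr2 : j * m % n < n := Nat.mod_lt _ hn
    have hcomm : n * (j * m / n) = (j * m / n) * n := Nat.mul_comm _ _
    have he : j * m - 1 = (j * m % n - 1) + (j * m / n) * n := by omega
    rw [he, Nat.add_mul_div_right _ _ hn, Nat.div_eq_of_lt (by omega), Nat.zero_add]
  have hcmn : ((Finset.range (j * m)).filter (fun x => m ∣ x ∧ n ∣ x)).card = 1 := by
    have heq : (Finset.range (j * m)).filter (fun x => m ∣ x ∧ n ∣ x)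
        = (Finset.range (j * m)).filter (fun x => m * n ∣ x) := by
      ext x
      simp only [Finset.mem_filter, Finset.mem_range]
      constructor
      · rintro ⟨hx, h1, h2⟩
        exact ⟨hx, Nat.Coprime.mul_dvd_of_dvd_of_dvd hcop h1 h2⟩
      · rintro ⟨hx, h⟩
        exact ⟨hx, dvd_trans (dvd_mul_right m n) h, dvd_trans (dvd_mul_left n m) h⟩
    rw [heq, card_mult_aux (m * n) _ (Nat.mul_pos (by omega) hn) hN]
    have hlt : j * m < n * m := Nat.mul_lt_mul_of_pos_right hjn (by omega)
    have hcomm : n * m = m * n := Nat.mul_comm _ _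
    rw [Nat.div_eq_of_lt (by omega)]
  have hie := Finset.card_union_add_card_inter
    ((Finset.range (j * m)).filter (fun x => m ∣ x))
    ((Finset.range (j * m)).filter (fun x => n ∣ x))
  rw [← Finset.filter_or, ← Finset.filter_and, hcm, hcn, hcmn] at hie
  omega

lemma index_eq_card (m n : ℕ) (k : ℕ → ℕ)
    (hmono : ∀ i j : ℕ, i < j → j < m + n → k i < k j)
    (hmem : ∀ x : ℕ, ((m ∣ x ∨ n ∣ x) ∧ x ≤ m * n) ↔ ∃ i < m + n, k i = x)
    (t : ℕ) (ht : t ≤ m * n) (i : ℕ) (hi : i < m + n) (hki : k i = t) :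
    i = ((Finset.range t).filter (fun x => m ∣ x ∨ n ∣ x)).card := by
  rw [← Finset.card_range i]
  apply Finset.card_bij (fun a _ => k a)
  · intro a ha
    rw [Finset.mem_range] at ha
    rw [Finset.mem_filter, Finset.mem_range]
    have h1 : k a < t := hki ▸ hmono a i ha hi
    exact ⟨h1, ((hmem (k a)).mpr ⟨a, by omega, rfl⟩).1⟩
  · intro a1 h1 a2 h2 he
    rw [Finset.mem_range] at h1 h2
    rcases lt_trichotomy a1 a2 with h | h | h
    · exact absurd he (hmono _ _ h (by omega)).ne
    · exact h
    · exact absurd he.symm (hmono _ _ h (by omega)).ne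
  · intro b hb
    rw [Finset.mem_filter, Finset.mem_range] at hb
    obtain ⟨a, ha, hka⟩ := (hmem b).mp ⟨hb.2, le_trans hb.1.le ht⟩
    refine ⟨a, Finset.mem_range.mpr ?_, hka⟩
    by_contra h
    have h2 : k i ≤ k a := by
      rcases eq_or_lt_of_le (not_lt.mp h : i ≤ a) with rfl | hlt
      · exact le_rfl
      · exact (hmono _ _ hlt ha).le
    rw [hki, hka] at h2
    omega

lemma div_sum_aux (c N a b : ℕ) (hc : 0 < c) (hab : a + b = c * N) (ha : ¬ c ∣ a) :
    a / c + b / c = N - 1 := by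
  have h1 := Nat.div_add_mod a c
  have h2 := Nat.div_add_mod b c
  have hma : a % c < c := Nat.mod_lt _ hc
  have hmb : b % c < c := Nat.mod_lt _ hc
  have ha0 : a % c ≠ 0 := fun h => ha (Nat.dvd_of_mod_eq_zero h)
  have hsum : a % c + b % c = c := by
    have h3 : (a + b) % c = 0 := by rw [hab]; exact Nat.mul_mod_right c N
    rw [Nat.add_mod] at h3
    rcases lt_or_ge (a % c + b % c) c with h | h
    · rw [Nat.mod_eq_of_lt h] at h3; omega
    · have h4 : a % c + b % c - c < c := by omega
      rw [Nat.mod_eq_sub_mod h, Nat.mod_eq_of_lt h4] at h3; omega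
  have hkey : c * (a / c + b / c + 1) = c * N := by
    have hx : c * (a / c + b / c + 1) = c * (a / c) + c * (b / c) + c := by ring
    omega
  have h5 : a / c + b / c + 1 = N := Nat.eq_of_mul_eq_mul_left hc hkey
  rw [← h5, Nat.add_sub_cancel]

/-- With `k` the increasing enumeration of
`𝔉(m,n) = (mℤ ∪ nℤ) ∩ [0, mn]` and `u j`, `w j` the indices with
`k (u j) = j*m` and `k (w j) = j*n`, one has:
`u 0 = w 0 = 0`, `u n = w m = m+n-1`, the floor formulas
`u j = ⌊j*m/n⌋ + j` (for `1 ≤ j ≤ n-1`) and `w j = ⌊j*n/m⌋ + j`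
(for `1 ≤ j ≤ m-1`), both sequences are strictly increasing, and
`u j + u (n-j) = w j' + w (m-j') = m+n-1`. -/
theorem u_w_index_properties (m n : ℕ) (hm : 2 ≤ m) (hmn : m < n)
    (hcop : Nat.Coprime m n) (k : ℕ → ℕ)
    (hmono : ∀ i j : ℕ, i < j → j < m + n → k i < k j)
    (hmem : ∀ x : ℕ, ((m ∣ x ∨ n ∣ x) ∧ x ≤ m * n) ↔ ∃ i < m + n, k i = x)
    (u w : ℕ → ℕ)
    (hu : ∀ j ≤ n, u j < m + n ∧ k (u j) = j * m)
    (hw : ∀ j ≤ m, w j < m + n ∧ k (w j) = j * n) :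
    u 0 = 0 ∧ w 0 = 0 ∧ u n = m + n - 1 ∧ w m = m + n - 1 ∧
    (∀ j, 1 ≤ j → j ≤ n - 1 → u j = j * m / n + j) ∧
    (∀ j, 1 ≤ j → j ≤ m - 1 → w j = j * n / m + j) ∧
    (∀ j₁ j₂, j₁ < j₂ → j₂ ≤ n → u j₁ < u j₂) ∧
    (∀ j₁ j₂, j₁ < j₂ → j₂ ≤ m → w j₁ < w j₂) ∧
    (∀ j ≤ n, u j + u (n - j) = m + n - 1) ∧
    (∀ j ≤ m, w j + w (m - j) = m + n - 1) := by
  have hmn0 : 0 < m + n := by omega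
  have hmono' : ∀ i j : ℕ, i ≤ j → j < m + n → k i ≤ k j := by
    intro i j hij hj
    rcases eq_or_lt_of_le hij with rfl | h
    · exact le_rfl
    · exact (hmono _ _ h hj).le
  have hinj : ∀ i j : ℕ, i < m + n → j < m + n → k i = k j → i = j := by
    intro i j hi hj hk
    rcases lt_trichotomy i j with h | h | h
    · exact absurd hk (hmono _ _ h hj).ne
    · exact h
    · exact absurd hk.symm (hmono _ _ h hi).ne
  have hkF : ∀ i, i < m + n → (m ∣ k i ∨ n ∣ k i) ∧ k i ≤ m * n :=
    fun i hi => (hmem _).mpr ⟨i, hi, rfl⟩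
  have hk0 : k 0 = 0 := by
    obtain ⟨i, hi, hki⟩ := (hmem 0).mp ⟨Or.inl (dvd_zero m), Nat.zero_le _⟩
    have hi0 : i = 0 := by
      by_contra h
      have := hmono 0 i (by omega) hi
      omega
    exact hi0 ▸ hki
  have hu0 : u 0 = 0 := by
    obtain ⟨h1, h2⟩ := hu 0 (Nat.zero_le _)
    exact hinj _ _ h1 hmn0 (by rw [h2, hk0]; simp)
  have hw0 : w 0 = 0 := by
    obtain ⟨h1, h2⟩ := hw 0 (Nat.zero_le _)
    exact hinj _ _ h1 hmn0 (by rw [h2, hk0]; simp)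
  have hun : u n = m + n - 1 := by
    obtain ⟨h1, h2⟩ := hu n le_rfl
    by_contra h
    have hlt : u n < m + n - 1 := by omega
    have h3 := hmono _ _ hlt (by omega)
    rw [h2] at h3
    have h4 := (hkF (m + n - 1) (by omega)).2
    have h5 : n * m = m * n := Nat.mul_comm _ _
    omega
  have hwm : w m = m + n - 1 := by
    obtain ⟨h1, h2⟩ := hw m le_rfl
    by_contra h
    have hlt : w m < m + n - 1 := by omega
    have h3 := hmono _ _ hlt (by omega)
    rw [h2] at h3
    have h4 := (hkF (m + n - 1) (by omega)).2
    omega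
  -- floor formula for u
  have huf : ∀ j, 1 ≤ j → j ≤ n - 1 → u j = j * m / n + j := by
    intro j hj1 hj2
    obtain ⟨h1, h2⟩ := hu j (by omega)
    have hjm : j * m ≤ m * n := by
      have := Nat.mul_le_mul_right m (show j ≤ n by omega)
      have : n * m = m * n := Nat.mul_comm _ _
      omega
    rw [index_eq_card m n k hmono hmem (j * m) hjm (u j) h1 h2]
    exact count_val m n j (by omega) hcop hj1 (by omega)
  -- floor formula for w
  have hswap : ∀ N : ℕ, (Finset.range N).filter (fun x => m ∣ x ∨ n ∣ x)
      = (Finset.range N).filter (fun x => n ∣ x ∨ m ∣ x) := by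
    intro N
    ext x
    simp only [Finset.mem_filter]
    tauto
  have hwf : ∀ j, 1 ≤ j → j ≤ m - 1 → w j = j * n / m + j := by
    intro j hj1 hj2
    obtain ⟨h1, h2⟩ := hw j (by omega)
    have hjn : j * n ≤ m * n := Nat.mul_le_mul_right n (by omega)
    rw [index_eq_card m n k hmono hmem (j * n) hjn (w j) h1 h2, hswap]
    exact count_val n m j (by omega) hcop.symm hj1 (by omega)
  -- strict monotonicity
  have humono : ∀ j₁ j₂, j₁ < j₂ → j₂ ≤ n → u j₁ < u j₂ := by
    intro j1 j2 hlt hle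
    obtain ⟨ha1, ha2⟩ := hu j1 (by omega)
    obtain ⟨hb1, hb2⟩ := hu j2 hle
    by_contra h
    have h1 : k (u j2) ≤ k (u j1) := hmono' _ _ (by omega) ha1
    rw [ha2, hb2] at h1
    have h2 : j1 * m < j2 * m := Nat.mul_lt_mul_of_pos_right hlt (by omega)
    omega
  have hwmono : ∀ j₁ j₂, j₁ < j₂ → j₂ ≤ m → w j₁ < w j₂ := by
    intro j1 j2 hlt hle
    obtain ⟨ha1, ha2⟩ := hw j1 (by omega)
    obtain ⟨hb1, hb2⟩ := hw j2 hle
    by_contra h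
    have h1 : k (w j2) ≤ k (w j1) := hmono' _ _ (by omega) ha1
    rw [ha2, hb2] at h1
    have h2 : j1 * n < j2 * n := Nat.mul_lt_mul_of_pos_right hlt (by omega)
    omega
  -- symmetry for u
  have husym : ∀ j ≤ n, u j + u (n - j) = m + n - 1 := by
    intro j hj
    rcases Nat.eq_zero_or_pos j with rfl | hj0
    · rw [hu0, Nat.sub_zero, hun]; omega
    rcases eq_or_lt_of_le hj with rfl | hjlt
    · rw [hun, Nat.sub_self, hu0]; omega
    have hd : j * m / n + (n - j) * m / n = m - 1 := by
      apply div_sum_aux n m _ _ (by omega)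
      · rw [← Nat.add_mul, Nat.add_sub_cancel' (by omega : j ≤ n)]
      · intro hdvd
        have h1 : n ∣ j := (Nat.Coprime.dvd_of_dvd_mul_right hcop.symm) hdvd
        have := Nat.le_of_dvd (by omega) h1
        omega
    rw [huf j (by omega) (by omega), huf (n - j) (by omega) (by omega)]
    omega
  -- symmetry for w
  have hwsym : ∀ j ≤ m, w j + w (m - j) = m + n - 1 := by
    intro j hj
    rcases Nat.eq_zero_or_pos j with rfl | hj0
    · rw [hw0, Nat.sub_zero, hwm]; omega
    rcases eq_or_lt_of_le hj with rfl | hjlt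
    · rw [hwm, Nat.sub_self, hw0]; omega
    have hd : j * n / m + (m - j) * n / m = n - 1 := by
      apply div_sum_aux m n _ _ (by omega)
      · rw [← Nat.add_mul, Nat.add_sub_cancel' (by omega : j ≤ m)]
      · intro hdvd
        have h1 : m ∣ j := (Nat.Coprime.dvd_of_dvd_mul_right hcop) hdvd
        have := Nat.le_of_dvd (by omega) h1
        omega
    rw [hwf j (by omega) (by omega), hwf (m - j) (by omega) (by omega)]
    omega
  exact ⟨hu0, hw0, hun, hwm, huf, hwf, humono, hwmono, husym, hwsym⟩
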